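/- Let G be an ℵ₁-free abelian group of infinite rank and let c ∈ G be an element of infinite order generating a pure cyclic subgroup ⟨c⟩ of G. Then the quotient group G/⟨c⟩ is an ℵ₁-free abelian group. -/

import Mathlib

open TensorProduct

/-- Quotients of `ℵ₁`-free abelian groups modulo pure cyclic subgroups are `ℵ₁`-free:
if `G` is an `ℵ₁`-free abelian group (every countable subgroup is free abelian) of
infinite rank and `c ∈ G` has infinite order and generates a pure cyclic subgroup
`⟨c⟩`, then `G/⟨c⟩` is an `ℵ₁`-free abelian group. -/
theorem quotient_by_pure_cyclic_subgroup_aleph1_free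
    (G : Type) [AddCommGroup G]
    (hG : ∀ S : AddSubgroup G, Countable S → Module.Free ℤ S)
    (hrank : Cardinal.aleph0 ≤ Module.rank ℚ (ℚ ⊗[ℤ] G))
    (c : G) (hc : ∀ n : ℤ, n ≠ 0 → n • c ≠ 0)
    (hpure : ∀ n : ℕ, 0 < n → ∀ x ∈ AddSubgroup.zmultiples c,
      (∃ g : G, (n : ℤ) • g = x) → ∃ u ∈ AddSubgroup.zmultiples c, (n : ℤ) • u = x) :
    ∀ S : AddSubgroup (G ⧸ AddSubgroup.zmultiples c), Countable S → Module.Free ℤ S := by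
  intro S hS
  set π : G →+ G ⧸ AddSubgroup.zmultiples c := QuotientAddGroup.mk' (AddSubgroup.zmultiples c) with hπ
  set T : AddSubgroup G := S.comap π with hT
  -- c belongs to T
  have hcT : c ∈ T := by
    have : π c = 0 := by
      simp [hπ, QuotientAddGroup.eq_zero_iff, AddSubgroup.mem_zmultiples]
    simpa [hT, AddSubgroup.mem_comap, this] using S.zero_mem
  set c' : T := ⟨c, hcT⟩ with hc'
  -- T is countable
  have hπsurj := QuotientAddGroup.mk'_surjective (AddSubgroup.zmultiples c)
  have hσ : ∀ s : S, ∃ x : G, π x = s.1 := fun s => hπsurj s.1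
  choose σ hσspec using hσ
  have hTcount : Countable T := by
    have hF : ∀ p : S × ℤ, σ p.1 + p.2 • c ∈ T := by
      intro p
      have h1 : π (p.2 • c) = 0 := by
        rw [hπ, QuotientAddGroup.mk'_apply, QuotientAddGroup.eq_zero_iff]
        exact AddSubgroup.zsmul_mem _ (AddSubgroup.mem_zmultiples c) _
      simp [hT, AddSubgroup.mem_comap, map_add, h1, hσspec, p.1.2]
    have hsurj : Function.Surjective (fun p : S × ℤ => (⟨σ p.1 + p.2 • c, hF p⟩ : T)) := by
      rintro ⟨x, hx⟩
      set s : S := ⟨π x, hx⟩ with hs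
      have : π (x - σ s) = 0 := by
        rw [map_sub, hσspec s, sub_eq_zero]
      rw [hπ, QuotientAddGroup.mk'_apply, QuotientAddGroup.eq_zero_iff] at this
      obtain ⟨k, hk⟩ := AddSubgroup.mem_zmultiples_iff.mp this
      refine ⟨(s, k), ?_⟩
      apply Subtype.ext
      simp only
      rw [hk]
      abel
    exact hsurj.countable
  -- T is free, get a basis
  haveI hTfree : Module.Free ℤ T := hG T hTcount
  set b := Module.Free.chooseBasis ℤ T with hb
  -- the ideal of values of functionals at c'
  set Φ : (T →ₗ[ℤ] ℤ) →ₗ[ℤ] ℤ := { toFun := fun φ => φ c', map_add' := by intros; rfl, map_smul' := by intros; rfl } with hΦ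
  set I : Submodule ℤ ℤ := LinearMap.range Φ with hI
  have hprin : I.IsPrincipal := inferInstance
  set d : ℤ := Submodule.IsPrincipal.generator I with hd
  have hdI : d ∈ I := Submodule.IsPrincipal.generator_mem I
  obtain ⟨f₀, hf₀⟩ := hdI
  have hdvd : ∀ i, d ∣ b.repr c' i := by
    intro i
    have hmem : b.repr c' i ∈ I := ⟨b.coord i, rfl⟩
    rw [← Submodule.IsPrincipal.span_singleton_generator I, Submodule.mem_span_singleton] at hmem
    obtain ⟨a, ha⟩ := hmem
    exact ⟨a, by rw [← ha, ← hd, smul_eq_mul, mul_comm]⟩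
  have hdne : d ≠ 0 := by
    intro h0
    have : c' = 0 := by
      apply b.repr.injective
      ext i
      have h := zero_dvd_iff.mp (h0 ▸ hdvd i)
      simp [h]
    have hcc : c = 0 := congrArg Subtype.val this
    exact hc 1 one_ne_zero (by simp [hcc])
  -- c' = d • g
  set g : T := b.repr.symm ((b.repr c').mapRange (· / d) (Int.zero_ediv d)) with hg
  have hgd : d • g = c' := by
    apply b.repr.injective
    rw [map_smul, hg, b.repr.apply_symm_apply]
    ext i
    rw [Finsupp.smul_apply, Finsupp.mapRange_apply, smul_eq_mul]
    exact Int.mul_ediv_cancel' (hdvd i)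
  -- purity forces d * d = 1
  have hdd : d * d = 1 := by
    have hgG : (d • g : T).1 = d • (g : G) := rfl
    set n : ℕ := d.natAbs with hn
    have hnpos : 0 < n := Int.natAbs_pos.mpr hdne
    have hex : ∃ x : G, (n : ℤ) • x = c := by
      rcases Int.natAbs_eq d with h | h
      · exact ⟨g, by rw [← h, ← hgG, hgd]⟩
      · refine ⟨-g, ?_⟩
        have : (n : ℤ) = -d := by omega
        rw [this, neg_smul, smul_neg, neg_neg, ← hgG, hgd]
    obtain ⟨u, hu, huc⟩ := hpure n hnpos c (AddSubgroup.mem_zmultiples c) hex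
    obtain ⟨m, hm⟩ := AddSubgroup.mem_zmultiples_iff.mp hu
    have : ((n : ℤ) * m - 1) • c = 0 := by
      rw [sub_smul, mul_smul, hm, huc, one_smul, sub_self]
    have h1 : (n : ℤ) * m = 1 := by
      by_contra hne
      exact hc _ (by omega) this
    have : (n : ℤ) = 1 := Int.eq_one_of_mul_eq_one_right (by positivity) h1
    have : d = 1 ∨ d = -1 := by omega
    rcases this with h | h <;> simp [h]
  -- functional with f c' = 1
  set f : T →ₗ[ℤ] ℤ := d • f₀ with hf
  have hfc : f c' = 1 := by
    have : f₀ c' = d := hf₀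
    simp [hf, this, hdd]
  -- the retraction ρ : T →+ G
  set ρ : T →+ G := AddMonoidHom.mk' (fun x => (x : G) - f x • c)
    (fun x y => by simp only [map_add, add_smul, AddSubgroup.coe_add]; abel) with hρ
  -- π restricted to T, onto S
  set π' : T →+ S := AddMonoidHom.mk' (fun x => (⟨π x.1, x.2⟩ : S))
    (fun x y => Subtype.ext (by simp)) with hπ'
  have hπ'surj : Function.Surjective π' := by
    rintro ⟨s, hs⟩
    obtain ⟨x, hx⟩ := hπsurj s
    exact ⟨⟨x, by show π x ∈ S; rw [hπ, hx]; exact hs⟩, Subtype.ext hx⟩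
  have hker : π'.ker = ρ.ker := by
    ext x
    simp only [AddMonoidHom.mem_ker, hπ', hρ, AddMonoidHom.coe_mk, ZeroHom.coe_mk]
    constructor
    · intro hx
      have hx0 : π x.1 = 0 := congrArg Subtype.val hx
      rw [hπ, QuotientAddGroup.mk'_apply, QuotientAddGroup.eq_zero_iff] at hx0
      obtain ⟨k, hk⟩ := AddSubgroup.mem_zmultiples_iff.mp hx0
      have hxk : x = k • c' := Subtype.ext (by simp [hk.symm, hc'])
      rw [hxk]
      simp [map_zsmul, hfc]; simp [hc']
    · intro hx
      have hx1 : x.1 = f x • c := by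
        have := sub_eq_zero.mp hx
        exact this
      have : π x.1 = 0 := by
        rw [hx1, hπ, QuotientAddGroup.mk'_apply, QuotientAddGroup.eq_zero_iff]
        exact AddSubgroup.zsmul_mem _ (AddSubgroup.mem_zmultiples c) _
      exact Subtype.ext this
  -- assemble the isomorphism S ≃+ ρ.range
  have e1 : S ≃+ (T ⧸ π'.ker) := (QuotientAddGroup.quotientKerEquivOfSurjective π' hπ'surj).symm
  have e2 : (T ⧸ π'.ker) ≃+ ρ.range := by
    rw [hker]
    exact QuotientAddGroup.quotientKerEquivRange ρ
  have e : S ≃+ ρ.range := e1.trans e2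
  haveI : Countable ρ.range := by
    have : Function.Surjective ρ.rangeRestrict := AddMonoidHom.rangeRestrict_surjective ρ
    exact this.countable
  haveI := hG ρ.range this
  exact Module.Free.of_equiv e.symm.toIntLinearEquiv
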